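/- Let G be a non-elementary hyperbolic group. For any ρ ∈ 𝒟(G) and R ≥ 0, there are at most finitely many ψ ∈ Out(G) with Δ(ρ, ψ(ρ)) ≤ R. That is, the isometric action of Out(G) on (𝒟(G), Δ) is metrically proper. -/

import Mathlib

open Filter Set MeasureTheory Topology

noncomputable section

variable {X : Type*}

/-- The Gromov product `(x|y)_w` with respect to `d`. -/
def gp (d : X → X → ℝ) (w x y : X) : ℝ := (d x w + d y w - d x y) / 2

/-- `d` is a pseudometric. -/
def IsPseudometric (d : X → X → ℝ) : Prop :=
  (∀ x, d x x = 0) ∧ (∀ x y, d x y = d y x) ∧ (∀ x y z, d x z ≤ d x y + d y z)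

/-- `d` is `δ`-hyperbolic: the four-point Gromov product condition. -/
def GromovHyperbolic (d : X → X → ℝ) (δ : ℝ) : Prop :=
  ∀ x y z w, min (gp d w x y) (gp d w y z) - δ ≤ gp d w x z

/-- `d` is `α`-rough geodesic: any two points are joined by an `α`-rough geodesic. -/
def RoughGeodesic (d : X → X → ℝ) (α : ℝ) : Prop :=
  ∀ x y : X, ∃ (n : ℕ) (γ : ℕ → X), γ 0 = x ∧ γ n = y ∧
    ∀ i j : ℕ, i ≤ n → j ≤ n →
      |(i : ℝ) - (j : ℝ)| - α ≤ d (γ i) (γ j) ∧ d (γ i) (γ j) ≤ |(i : ℝ) - (j : ℝ)| + α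

variable {G : Type*} [Group G]

/-- Left invariance of a pseudometric on a group. -/
def LeftInvariant (d : G → G → ℝ) : Prop := ∀ g x y : G, d (g * x) (g * y) = d x y

/-- Word norm with respect to a subset `S`. -/
def wordNorm (S : Set G) (w : G) : ℕ :=
  sInf {k : ℕ | ∃ f : Fin k → G, (∀ i, f i ∈ S) ∧ (List.ofFn f).prod = w}

/-- Word metric with respect to a subset `S`. -/
def wordDist (S : Set G) (x y : G) : ℝ := (wordNorm S (x⁻¹ * y) : ℝ)

/-- `S` is a symmetric generating set. -/
def GenSymm (S : Set G) : Prop := (∀ s ∈ S, s⁻¹ ∈ S) ∧ Subgroup.closure S = ⊤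

/-- `d'` is quasi-isometric to `d` (via the identity map of `G`). -/
def QIsometric (d d' : G → G → ℝ) : Prop :=
  ∃ l1 l2 e : ℝ, 0 < l1 ∧ 0 < l2 ∧ 0 ≤ e ∧
    ∀ x y : G, d x y / l1 - e ≤ d' x y ∧ d' x y ≤ l2 * d x y + e

/-- Membership in `D(G)`: a left-invariant hyperbolic pseudometric on `G`
quasi-isometric to a word metric w.r.t. a finite symmetric generating set. -/
def InD (d : G → G → ℝ) : Prop :=
  IsPseudometric d ∧ LeftInvariant d ∧ (∃ δ ≥ (0 : ℝ), GromovHyperbolic d δ) ∧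
    ∃ S : Finset G, GenSymm (S : Set G) ∧ QIsometric (wordDist (S : Set G)) d

/-- `G` is a hyperbolic group: some word metric is Gromov hyperbolic. -/
def IsHyperbolicGroup (G : Type*) [Group G] : Prop :=
  ∃ S : Finset G, GenSymm (S : Set G) ∧ ∃ δ ≥ (0 : ℝ), GromovHyperbolic (wordDist (S : Set G)) δ

/-- `G` is non-elementary: it is not virtually abelian. -/
def NonElementary (G : Type*) [Group G] : Prop :=
  ¬ ∃ H : Subgroup G, H.FiniteIndex ∧ ∀ a ∈ H, ∀ b ∈ H, a * b = b * a

/-- Translation length `ℓ_d(x) = lim_n d(x^n,1)/n`; by Fekete's subadditivity lemma the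
limit exists and equals the infimum of `d(x^n,1)/n` over `n ≥ 1`. -/
def tlen (d : G → G → ℝ) (x : G) : ℝ :=
  sInf {r : ℝ | ∃ n : ℕ, r = d (x ^ (n + 1)) 1 / (n + 1)}

/-- Dilation `Dil(d,d') = sup_x ℓ_d(x)/ℓ_{d'}(x)` over infinite-order elements. -/
def Dil (d d' : G → G → ℝ) : ℝ :=
  sSup {r : ℝ | ∃ x : G, ¬ IsOfFinOrder x ∧ r = tlen d x / tlen d' x}

/-- Critical exponent `h(d) = lim_n log|B_d(n)|/n` (the limit exists, so it equals
the limsup used here). -/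
def hCrit (d : G → G → ℝ) : ℝ :=
  Filter.limsup (fun n : ℕ => Real.log (Set.ncard {x : G | d x 1 ≤ (n : ℝ)}) / (n : ℝ)) atTop

/-- `Λ(d1,d2)`: the infimum of `λ1·λ2` over quasi-isometry constants between `d1,d2`. -/
def Lam (d1 d2 : G → G → ℝ) : ℝ :=
  sInf {l : ℝ | ∃ l1 l2 A : ℝ, 0 < l1 ∧ 0 < l2 ∧ 0 ≤ A ∧ l = l1 * l2 ∧
    ∀ x y : G, d2 x y / l1 - A ≤ d1 x y ∧ d1 x y ≤ l2 * d2 x y + A}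

/-- Rough similarity of pseudometrics: `|d − k·d'| ≤ A` for some `k > 0`, `A ≥ 0`. -/
def RSim (d d' : G → G → ℝ) : Prop :=
  ∃ k A : ℝ, 0 < k ∧ 0 ≤ A ∧ ∀ x y : G, |d x y - k * d' x y| ≤ A

set_option linter.unusedSectionVars false in
theorem rsim_refl (d : G → G → ℝ) : RSim d d :=
  ⟨1, 0, one_pos, le_refl 0, fun x y => by simp⟩

set_option linter.unusedSectionVars false in
theorem rsim_symm {d d' : G → G → ℝ} : RSim d d' → RSim d' d := by
  rintro ⟨k, A, hk, hA, h⟩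
  refine ⟨k⁻¹, k⁻¹ * A, inv_pos.2 hk, mul_nonneg (inv_pos.2 hk).le hA, fun x y => ?_⟩
  have hk0 : k ≠ 0 := ne_of_gt hk
  have h1 : d' x y - k⁻¹ * d x y = -(k⁻¹ * (d x y - k * d' x y)) := by
    field_simp
    ring
  rw [h1, abs_neg, abs_mul, abs_of_pos (inv_pos.2 hk)]
  exact mul_le_mul_of_nonneg_left (h x y) (inv_pos.2 hk).le

set_option linter.unusedSectionVars false in
theorem rsim_trans {d1 d2 d3 : G → G → ℝ} : RSim d1 d2 → RSim d2 d3 → RSim d1 d3 := by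
  rintro ⟨k1, A1, hk1, hA1, h1⟩ ⟨k2, A2, hk2, hA2, h2⟩
  refine ⟨k1 * k2, A1 + k1 * A2, mul_pos hk1 hk2, by positivity, fun x y => ?_⟩
  have h3 : |k1 * d2 x y - k1 * k2 * d3 x y| = k1 * |d2 x y - k2 * d3 x y| := by
    rw [show k1 * d2 x y - k1 * k2 * d3 x y = k1 * (d2 x y - k2 * d3 x y) by ring,
      abs_mul, abs_of_pos hk1]
  calc |d1 x y - k1 * k2 * d3 x y|
      ≤ |d1 x y - k1 * d2 x y| + |k1 * d2 x y - k1 * k2 * d3 x y| :=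
        abs_sub_le _ _ _
    _ ≤ A1 + k1 * A2 := by
        rw [h3]
        exact add_le_add (h1 x y) (mul_le_mul_of_nonneg_left (h2 x y) hk1.le)

/-- Elements of `D(G)`. -/
def DSub (G : Type*) [Group G] : Type _ := {d : G → G → ℝ // InD d}

/-- Rough similarity as a setoid on `D(G)`. -/
def rsSetoid (G : Type*) [Group G] : Setoid (DSub G) :=
  ⟨fun d d' => RSim d.1 d'.1,
    ⟨fun d => rsim_refl d.1, fun h => rsim_symm h, fun h h' => rsim_trans h h'⟩⟩

/-- The space `𝒟(G)` of metric structures on `G`. -/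
def MetricStructures (G : Type*) [Group G] : Type _ := Quotient (rsSetoid G)

/-- The distance `Δ = log Λ` on `𝒟(G)` (the value of `Λ` does not depend on the
choice of representatives). -/
def Delta (ρ1 ρ2 : MetricStructures G) : ℝ :=
  Real.log (sInf {l : ℝ | ∃ d1 d2 : DSub G,
    Quotient.mk (rsSetoid G) d1 = ρ1 ∧ Quotient.mk (rsSetoid G) d2 = ρ2 ∧ l = Lam d1.1 d2.1})

/-- Pullback of a pseudometric under an automorphism: `ψ(d)(x,y) = d(ψ⁻¹x, ψ⁻¹y)`. -/
def pull (ψ : MulAut G) (d : G → G → ℝ) : G → G → ℝ :=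
  fun x y => d (ψ.symm x) (ψ.symm y)

/-! ### Auxiliary development -/

section Aux

variable {G : Type*} [Group G]

/-- The set of word lengths representing `g`. -/
def WNset (S : Set G) (g : G) : Set ℕ :=
  {k : ℕ | ∃ f : Fin k → G, (∀ i, f i ∈ S) ∧ (List.ofFn f).prod = g}

lemma wordNorm_eq_sInf (S : Set G) (g : G) : wordNorm S g = sInf (WNset S g) := rfl

lemma mem_WNset_iff {S : Set G} {g : G} {k : ℕ} :
    k ∈ WNset S g ↔ ∃ l : List G, (∀ x ∈ l, x ∈ S) ∧ l.prod = g ∧ l.length = k := by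
  constructor
  · rintro ⟨f, hf, hprod⟩
    exact ⟨List.ofFn f, by
      intro x hx
      rcases List.mem_ofFn.1 hx with ⟨i, rfl⟩
      exact hf i, hprod, List.length_ofFn⟩
  · rintro ⟨l, hl, hprod, hlen⟩
    subst hlen
    exact ⟨l.get, fun i => hl _ (List.get_mem l i), by rw [List.ofFn_get]; exact hprod⟩

lemma exists_list_rep {S : Set G} (hS : GenSymm S) (g : G) :
    ∃ l : List G, (∀ x ∈ l, x ∈ S) ∧ l.prod = g := by
  have hg : g ∈ Subgroup.closure S := by rw [hS.2]; exact Subgroup.mem_top g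
  induction hg using Subgroup.closure_induction with
  | mem x hx => exact ⟨[x], by simpa using hx, by simp⟩
  | one => exact ⟨[], by simp, by simp⟩
  | mul x y hx hy ihx ihy =>
      rcases ihx with ⟨l1, h1, p1⟩
      rcases ihy with ⟨l2, h2, p2⟩
      refine ⟨l1 ++ l2, ?_, by rw [List.prod_append, p1, p2]⟩
      intro z hz
      rcases List.mem_append.1 hz with h | h
      · exact h1 z h
      · exact h2 z h
  | inv x hx ihx =>
      rcases ihx with ⟨l, h1, p1⟩
      refine ⟨(l.map (·⁻¹)).reverse, ?_, ?_⟩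
      · intro z hz
        rcases List.mem_map.1 (List.mem_reverse.1 hz) with ⟨w, hw, rfl⟩
        exact hS.1 w (h1 w hw)
      · rw [← p1, ← List.prod_inv_reverse]

lemma WNset_nonempty {S : Set G} (hS : GenSymm S) (g : G) : (WNset S g).Nonempty := by
  rcases exists_list_rep hS g with ⟨l, hl, hprod⟩
  exact ⟨l.length, mem_WNset_iff.2 ⟨l, hl, hprod, rfl⟩⟩

lemma wordNorm_le_length {S : Set G} {l : List G} (hl : ∀ x ∈ l, x ∈ S) :
    wordNorm S l.prod ≤ l.length :=
  Nat.sInf_le (mem_WNset_iff.2 ⟨l, hl, rfl, rfl⟩)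

lemma exists_min_list {S : Set G} (hS : GenSymm S) (g : G) :
    ∃ l : List G, (∀ x ∈ l, x ∈ S) ∧ l.prod = g ∧ l.length = wordNorm S g :=
  mem_WNset_iff.1 (Nat.sInf_mem (WNset_nonempty hS g))

lemma wordNorm_one (S : Set G) : wordNorm S (1 : G) = 0 :=
  Nat.le_zero.1 (by simpa using wordNorm_le_length (S := S) (l := []) (by simp))

lemma wordNorm_mul_le {S : Set G} (hS : GenSymm S) (g h : G) :
    wordNorm S (g * h) ≤ wordNorm S g + wordNorm S h := by
  rcases exists_min_list hS g with ⟨l1, h1, p1, n1⟩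
  rcases exists_min_list hS h with ⟨l2, h2, p2, n2⟩
  have : wordNorm S (g * h) ≤ (l1 ++ l2).length := by
    have := wordNorm_le_length (S := S) (l := l1 ++ l2) (by
      intro z hz
      rcases List.mem_append.1 hz with hz | hz
      · exact h1 z hz
      · exact h2 z hz)
    rwa [List.prod_append, p1, p2] at this
  simpa [n1, n2] using this

lemma wordNorm_inv_le {S : Set G} (hS : GenSymm S) (g : G) :
    wordNorm S g⁻¹ ≤ wordNorm S g := by
  rcases exists_min_list hS g with ⟨l, hl, pl, nl⟩
  have hmem : ∀ x ∈ (l.map (·⁻¹)).reverse, x ∈ S := by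
    intro z hz
    rcases List.mem_map.1 (List.mem_reverse.1 hz) with ⟨w, hw, rfl⟩
    exact hS.1 w (hl w hw)
  have hprod : ((l.map (·⁻¹)).reverse).prod = g⁻¹ := by
    rw [← pl, ← List.prod_inv_reverse]
  have := wordNorm_le_length hmem
  rwa [hprod, List.length_reverse, List.length_map, nl] at this

lemma wordNorm_inv {S : Set G} (hS : GenSymm S) (g : G) :
    wordNorm S g⁻¹ = wordNorm S g :=
  le_antisymm (wordNorm_inv_le hS g) (by simpa using wordNorm_inv_le hS g⁻¹)

lemma wordNorm_gen {S : Set G} {s : G} (hs : s ∈ S) : wordNorm S s ≤ 1 := by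
  simpa using wordNorm_le_length (S := S) (l := [s]) (by simpa using hs)

/-- geodesic prefix point -/
lemma exists_geodesic_prefix {S : Set G} (hS : GenSymm S) (g : G) (r : ℕ)
    (hr : r ≤ wordNorm S g) :
    ∃ x : G, wordNorm S x = r ∧ wordNorm S (x⁻¹ * g) = wordNorm S g - r := by
  rcases exists_min_list hS g with ⟨l, hl, pl, nl⟩
  refine ⟨(l.take r).prod, ?_, ?_⟩
  all_goals {
    have h1 : wordNorm S (l.take r).prod ≤ r := by
      have := wordNorm_le_length (S := S) (l := l.take r)
        (fun x hx => hl x (List.mem_of_mem_take hx))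
      rwa [List.length_take, min_eq_left (by omega)] at this
    have h2 : wordNorm S ((l.take r).prod⁻¹ * g) ≤ wordNorm S g - r := by
      have := wordNorm_le_length (S := S) (l := l.drop r)
        (fun x hx => hl x (List.mem_of_mem_drop hx))
      have hp : (l.drop r).prod = (l.take r).prod⁻¹ * g := by
        rw [← pl, ← List.prod_take_mul_prod_drop l r]
        group
      rwa [hp, List.length_drop, nl] at this
    have h3 : wordNorm S g ≤ wordNorm S (l.take r).prod + wordNorm S ((l.take r).prod⁻¹ * g) := by
      have := wordNorm_mul_le hS (l.take r).prod ((l.take r).prod⁻¹ * g)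
      simpa using this
    omega
  }

end Aux

section Aux2

variable {G : Type*} [Group G]

/-- Real-valued word norm. -/
noncomputable def nrm (S : Set G) (g : G) : ℝ := (wordNorm S g : ℝ)

/-- Gromov product at the identity for the word metric. -/
noncomputable def ipr (S : Set G) (x y : G) : ℝ :=
  (nrm S x + nrm S y - nrm S (x⁻¹ * y)) / 2

variable {S : Set G} (hS : GenSymm S)

lemma nrm_nonneg (g : G) : 0 ≤ nrm S g := Nat.cast_nonneg _

lemma nrm_one : nrm S (1 : G) = 0 := by simp [nrm, wordNorm_one]

include hS

lemma nrm_inv (g : G) : nrm S g⁻¹ = nrm S g := by simp [nrm, wordNorm_inv hS]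

lemma nrm_mul_le (g h : G) : nrm S (g * h) ≤ nrm S g + nrm S h := by
  have := wordNorm_mul_le hS g h
  unfold nrm
  exact_mod_cast this

lemma nrm_mul_ge (g h : G) : nrm S g - nrm S h ≤ nrm S (g * h) := by
  have := nrm_mul_le hS (g * h) h⁻¹
  rw [mul_inv_cancel_right, nrm_inv hS] at this
  linarith

lemma ipr_symm (x y : G) : ipr S x y = ipr S y x := by
  unfold ipr
  rw [show (y⁻¹ * x) = (x⁻¹ * y)⁻¹ by group, nrm_inv hS]
  ring

lemma ipr_nonneg (x y : G) : 0 ≤ ipr S x y := by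
  unfold ipr
  have := nrm_mul_le hS x⁻¹ y
  rw [nrm_inv hS] at this
  linarith

/-- Unfolding `gp` of the word metric at base point 1. -/
lemma gp_wordDist_one (x y : G) : gp (wordDist S) 1 x y = ipr S x y := by
  unfold gp wordDist ipr nrm
  rw [mul_one, mul_one, wordNorm_inv hS x, wordNorm_inv hS y]

lemma ipr_hyp {δ : ℝ} (hδ : GromovHyperbolic (wordDist S) δ) (x y z : G) :
    min (ipr S x y) (ipr S y z) - δ ≤ ipr S x z := by
  have := hδ x y z 1
  rwa [gp_wordDist_one hS, gp_wordDist_one hS, gp_wordDist_one hS] at this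

omit hS [Group G] in
lemma min_trick {A B C δ : ℝ} (h : min A B - δ ≤ C) (hB : C + δ < B) : A ≤ C + δ := by
  rcases le_or_gt A B with h' | h'
  · rw [min_eq_left h'] at h; linarith
  · rw [min_eq_right h'.le] at h; linarith

/-- comparison of word norms w.r.t. two generating sets -/
lemma wordNorm_comp {S' : Set G} (hS' : GenSymm S') (κ : ℕ)
    (hκ : ∀ s ∈ S, wordNorm S' s ≤ κ) (g : G) :
    wordNorm S' g ≤ κ * wordNorm S g := by
  rcases exists_min_list hS g with ⟨l, hl, pl, nl⟩
  rw [← nl, ← pl]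
  clear pl nl
  induction l with
  | nil => simp [wordNorm_one]
  | cons a t ih =>
      have h1 : wordNorm S' (a * t.prod) ≤ wordNorm S' a + wordNorm S' t.prod :=
        wordNorm_mul_le hS' a t.prod
      have h2 : wordNorm S' t.prod ≤ κ * t.length := ih (fun x hx => hl x (List.mem_cons_of_mem a hx))
      have h3 : wordNorm S' a ≤ κ := hκ a (hl a List.mem_cons_self)
      simp only [List.prod_cons, List.length_cons]
      calc wordNorm S' (a * t.prod) ≤ κ + κ * t.length := by omega
      _ = κ * (t.length + 1) := by ring

end Aux2

section Aux3

variable {G : Type*} [Group G]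

lemma tlen_set_nonempty (d : G → G → ℝ) (x : G) :
    {r : ℝ | ∃ n : ℕ, r = d (x ^ (n + 1)) 1 / (n + 1)}.Nonempty :=
  ⟨d (x ^ 1) 1 / 1, ⟨0, by norm_num⟩⟩

lemma tlen_bddBelow {d : G → G → ℝ} {x : G} (hnn : ∀ n : ℕ, 0 ≤ d (x ^ (n + 1)) 1) :
    BddBelow {r : ℝ | ∃ n : ℕ, r = d (x ^ (n + 1)) 1 / (n + 1)} := by
  refine ⟨0, fun r hr => ?_⟩
  rcases hr with ⟨n, rfl⟩
  exact div_nonneg (hnn n) (by positivity)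

lemma tlen_ge {d : G → G → ℝ} {x : G} {c : ℝ}
    (h : ∀ n : ℕ, c ≤ d (x ^ (n + 1)) 1 / (n + 1)) : c ≤ tlen d x :=
  le_csInf (tlen_set_nonempty d x) (fun r hr => by rcases hr with ⟨n, rfl⟩; exact h n)

lemma tlen_nonneg {d : G → G → ℝ} {x : G} (hnn : ∀ n : ℕ, 0 ≤ d (x ^ (n + 1)) 1) :
    0 ≤ tlen d x := by
  refine tlen_ge (fun n => ?_)
  exact div_nonneg (hnn n) (by positivity)

lemma tlen_le_pow {d : G → G → ℝ} {x : G} (hnn : ∀ n : ℕ, 0 ≤ d (x ^ (n + 1)) 1)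
    (m : ℕ) (hm : 1 ≤ m) : tlen d x ≤ d (x ^ m) 1 / m := by
  obtain ⟨n, rfl⟩ : ∃ n : ℕ, m = n + 1 := ⟨m - 1, by omega⟩
  refine csInf_le (tlen_bddBelow hnn) ⟨n, by push_cast; ring_nf⟩

lemma tlen_transfer (dA dB : G → G → ℝ) (u v : G) (P Q : ℝ) (hP : 0 ≤ P) (hQ : 0 ≤ Q)
    (hAnn : ∀ n : ℕ, 0 ≤ dA (v ^ (n + 1)) 1)
    (hBnn : ∀ n : ℕ, 0 ≤ dB (u ^ (n + 1)) 1)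
    (hsub : ∀ m n : ℕ, dB (u ^ (m + n)) 1 ≤ dB (u ^ m) 1 + dB (u ^ n) 1)
    (hcomp : ∀ n : ℕ, dA (v ^ (n + 1)) 1 ≤ P * dB (u ^ (n + 1)) 1 + Q) :
    tlen dA v ≤ P * tlen dB u := by
  refine le_of_forall_pos_le_add (fun ε hε => ?_)
  set c := tlen dB u with hc
  have hP1 : (0:ℝ) < P + 1 := by linarith
  have hε' : 0 < ε / (2 * (P + 1)) := by positivity
  obtain ⟨n, hn⟩ : ∃ n : ℕ, dB (u ^ (n + 1)) 1 / (n + 1) < c + ε / (2 * (P + 1)) := by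
    have hlt : c < c + ε / (2 * (P + 1)) := by linarith
    obtain ⟨r, hrmem, hr⟩ :=
      (csInf_lt_iff (tlen_bddBelow hBnn) (tlen_set_nonempty dB u)).1 hlt
    rcases hrmem with ⟨n, rfl⟩
    exact ⟨n, hr⟩
  have hmult : ∀ k : ℕ, dB (u ^ ((n + 1) * (k + 1))) 1 ≤ (k + 1) * dB (u ^ (n + 1)) 1 := by
    intro k
    induction k with
    | zero => simp
    | succ k ih =>
        have h1 := hsub ((n + 1) * (k + 1)) (n + 1)
        have h2 : (n + 1) * (k + 1 + 1) = (n + 1) * (k + 1) + (n + 1) := by ring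
        rw [h2]
        push_cast
        push_cast at ih
        linarith
  set k := Nat.ceil (2 * Q / ε) with hk
  set m := (n + 1) * (k + 1) with hm
  have hm1 : 1 ≤ m := Nat.one_le_iff_ne_zero.2 (by positivity)
  have hmR : (m : ℝ) = ((n : ℝ) + 1) * ((k : ℝ) + 1) := by push_cast [hm]; ring
  have hmpos : (0:ℝ) < m := by positivity
  have hnpos : (0:ℝ) < (n:ℝ) + 1 := by positivity
  have hkpos : (0:ℝ) < (k:ℝ) + 1 := by positivity
  have step1 : tlen dA v ≤ dA (v ^ m) 1 / m := tlen_le_pow hAnn m hm1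
  have step2 : dA (v ^ m) 1 ≤ P * ((k + 1) * dB (u ^ (n + 1)) 1) + Q := by
    have h1 : dA (v ^ m) 1 ≤ P * dB (u ^ m) 1 + Q := by
      obtain ⟨n', hn'⟩ : ∃ n' : ℕ, m = n' + 1 := ⟨m - 1, by omega⟩
      rw [hn']; exact hcomp n'
    have h2 := hmult k
    nlinarith [hBnn n]
  have step3 : dA (v ^ m) 1 / m ≤ P * (dB (u ^ (n + 1)) 1 / (n + 1)) + Q / (k + 1) := by
    rw [div_le_iff₀ hmpos]
    have expand : (P * (dB (u ^ (n + 1)) 1 / (n + 1)) + Q / (k + 1)) * m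
        = P * ((k + 1) * dB (u ^ (n + 1)) 1) + Q * ((n:ℝ) + 1) := by
      rw [hmR]; field_simp
    rw [expand]
    have : Q ≤ Q * ((n:ℝ)+1) := by nlinarith
    linarith
  have step4 : Q / ((k:ℝ) + 1) ≤ ε / 2 := by
    rw [div_le_iff₀ hkpos]
    have hceil : 2 * Q / ε ≤ (k : ℝ) := Nat.le_ceil _
    rw [div_le_iff₀ hε] at hceil
    linarith
  have step5 : P * (dB (u ^ (n + 1)) 1 / (n + 1)) ≤ P * c + ε / 2 := by
    have h1 : P * (dB (u ^ (n + 1)) 1 / (n + 1)) ≤ P * (c + ε / (2 * (P + 1))) :=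
      mul_le_mul_of_nonneg_left hn.le hP
    have h2 : P * (ε / (2 * (P + 1))) ≤ ε / 2 := by
      have he : P * (ε / (2 * (P + 1))) = ε / 2 * (P / (P + 1)) := by field_simp
      have hle : P / (P + 1) ≤ 1 := by rw [div_le_one hP1]; linarith
      have h0 : 0 ≤ P / (P + 1) := by positivity
      rw [he]
      nlinarith
    linarith [mul_add P c (ε / (2 * (P + 1)))]
  linarith

end Aux3

section Aux4

variable {G : Type*} [Group G] {S : Set G} (hS : GenSymm S)

include hS

lemma wordDist_norm (w : G) : wordDist S w 1 = nrm S w := by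
  unfold wordDist nrm
  rw [mul_one, wordNorm_inv hS]

omit hS in
lemma wordDist_norm_nonneg (w : G) : 0 ≤ wordDist S w 1 := Nat.cast_nonneg _

lemma nrm_pow_subadd (u : G) (m n : ℕ) :
    wordDist S (u ^ (m + n)) 1 ≤ wordDist S (u ^ m) 1 + wordDist S (u ^ n) 1 := by
  rw [wordDist_norm hS, wordDist_norm hS, wordDist_norm hS, pow_add]
  exact nrm_mul_le hS _ _

lemma tlen_le_nrm (v : G) : tlen (wordDist S) v ≤ nrm S v := by
  have := tlen_le_pow (d := wordDist S) (x := v) (fun n => Nat.cast_nonneg _) 1 le_rfl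
  simpa [wordDist_norm hS] using this

lemma tlen_conj_le (z v : G) :
    tlen (wordDist S) (z⁻¹ * v * z) ≤ tlen (wordDist S) v := by
  have h := tlen_transfer (wordDist S) (wordDist S) v (z⁻¹ * v * z) 1 (2 * nrm S z)
    (by norm_num) (by have := nrm_nonneg (S := S) z; linarith)
    (fun n => Nat.cast_nonneg _) (fun n => Nat.cast_nonneg _)
    (nrm_pow_subadd hS v)
    (fun n => by
      have hconj : (z⁻¹ * v * z) ^ (n + 1) = z⁻¹ * v ^ (n + 1) * z := by
        have : z⁻¹ * v * z = z⁻¹ * v * (z⁻¹)⁻¹ := by rw [inv_inv]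
        rw [this, conj_pow, inv_inv]
      rw [hconj, wordDist_norm hS, wordDist_norm hS]
      have h1 : nrm S (z⁻¹ * v ^ (n+1) * z) ≤ nrm S (z⁻¹ * v ^ (n+1)) + nrm S z :=
        nrm_mul_le hS _ _
      have h2 : nrm S (z⁻¹ * v ^ (n+1)) ≤ nrm S z⁻¹ + nrm S (v ^ (n+1)) := nrm_mul_le hS _ _
      rw [nrm_inv hS] at h2
      linarith)
  linarith

/-- Lemma A: lower bound for the translation length. -/
lemma tlenA {δ : ℝ} (hδ0 : 0 ≤ δ) (hδ : GromovHyperbolic (wordDist S) δ) (g : G) :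
    nrm S g - 2 * ipr S g g⁻¹ - 2 * δ ≤ tlen (wordDist S) g := by
  set σ := ipr S g g⁻¹ with hσ
  set c := nrm S g - 2 * σ - 2 * δ with hcdef
  by_cases hcase : nrm S g ≤ 2 * σ + 2 * δ
  · have : c ≤ 0 := by rw [hcdef]; linarith
    have h0 : (0:ℝ) ≤ tlen (wordDist S) g := tlen_nonneg (fun n => Nat.cast_nonneg _)
    linarith
  · push_neg at hcase
    have hσ0 : 0 ≤ σ := ipr_nonneg hS g g⁻¹
    have key : ∀ n : ℕ, c ≤ nrm S (g ^ (n + 1)) - nrm S (g ^ n) := by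
      intro n
      induction n with
      | zero => simp only [zero_add, pow_one, pow_zero, nrm_one]; rw [hcdef]; linarith
      | succ n ih =>
          have hpow1 : (g ^ (n + 1))⁻¹ * g = (g ^ n)⁻¹ := by
            rw [pow_succ' g n]; group
          have hip1 : nrm S g - σ - δ ≤ ipr S (g ^ (n + 1)) g := by
            unfold ipr
            rw [hpow1, nrm_inv hS]
            linarith
          have hip2 : ipr S (g ^ (n + 1)) g⁻¹ ≤ σ + δ := by
            have h4 := ipr_hyp hS hδ g (g ^ (n + 1)) g⁻¹
            rw [min_comm] at h4
            have hB : ipr S g g⁻¹ + δ < ipr S g (g ^ (n + 1)) := by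
              rw [ipr_symm hS g (g ^ (n + 1)), ← hσ]
              linarith
            have := min_trick h4 hB
            rw [← hσ] at this
            linarith
          have hpow2 : (g ^ (n + 1))⁻¹ * g⁻¹ = (g ^ (n + 1 + 1))⁻¹ := by
            rw [pow_succ' g (n+1)]; group
          have step : ipr S (g ^ (n + 1)) g⁻¹
              = (nrm S (g ^ (n + 1)) + nrm S g - nrm S (g ^ (n + 1 + 1))) / 2 := by
            unfold ipr
            rw [hpow2, nrm_inv hS, nrm_inv hS]
          rw [step] at hip2
          rw [hcdef]
          linarith
    have key2 : ∀ n : ℕ, ((n : ℝ) + 1) * c ≤ nrm S (g ^ (n + 1)) := by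
      intro n
      induction n with
      | zero =>
          have := key 0
          simp only [pow_zero, nrm_one] at this
          simpa using this
      | succ n ih =>
          have := key (n + 1)
          push_cast
          push_cast at ih
          linarith
    refine tlen_ge (fun n => ?_)
    rw [wordDist_norm hS]
    rw [le_div_iff₀ (by positivity : (0:ℝ) < (n:ℝ) + 1)]
    have := key2 n
    linarith [key2 n]

end Aux4

section Aux5

variable {G : Type*} [Group G] {S : Set G} (hS : GenSymm S)

include hS

/-- Final computation: a pair with small separated Gromov products gives an
element of large translation length. -/
lemma FC {δ : ℝ} (hδ0 : 0 ≤ δ) (hδ : GromovHyperbolic (wordDist S) δ)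
    (g h : G) (μ r ρ : ℝ)
    (hg1 : μ - 2*r - 1 ≤ nrm S g) (hg2 : nrm S g ≤ μ)
    (hh1 : μ - 2*r - 1 ≤ nrm S h) (hh2 : nrm S h ≤ μ)
    (hip1 : ipr S g⁻¹ h ≤ ρ) (hip2 : ipr S g h⁻¹ ≤ ρ)
    (hnum : ρ + 2*δ + 2 ≤ μ - 3*r - ρ) :
    2*μ - 4*r - 4*ρ - 6*δ - 2 ≤ tlen (wordDist S) (g * h) := by
  have e0 : ipr S g⁻¹ h = (nrm S g + nrm S h - nrm S (g * h)) / 2 := by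
    unfold ipr
    rw [inv_inv, nrm_inv hS]
  have hwl : 2*μ - 4*r - 2 - 2*ρ ≤ nrm S (g * h) := by
    rw [e0] at hip1; linarith
  have e1 : ipr S (g * h) g = (nrm S (g * h) + nrm S g - nrm S h) / 2 := by
    unfold ipr
    rw [show (g * h)⁻¹ * g = h⁻¹ * (g⁻¹ * g) by group, inv_mul_cancel, mul_one, nrm_inv hS]
  have E1 : μ - 3*r - ρ - 3/2 ≤ ipr S (g * h) g := by rw [e1]; linarith
  have e2 : ipr S (h⁻¹ * g⁻¹) h⁻¹ = (nrm S (g * h) + nrm S h - nrm S g) / 2 := by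
    unfold ipr
    rw [show (h⁻¹ * g⁻¹)⁻¹ * h⁻¹ = g * (h * h⁻¹) by group, mul_inv_cancel, mul_one,
      show h⁻¹ * g⁻¹ = (g * h)⁻¹ by group, nrm_inv hS, nrm_inv hS]
  have E2 : μ - 3*r - ρ - 3/2 ≤ ipr S (h⁻¹ * g⁻¹) h⁻¹ := by rw [e2]; linarith
  -- Step C
  have h5 := ipr_hyp hS hδ g (g * h) h⁻¹
  rw [min_comm] at h5
  have hB1 : ipr S g h⁻¹ + δ < ipr S g (g * h) := by
    rw [ipr_symm hS g (g * h)]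
    linarith
  have hC : ipr S (g * h) h⁻¹ ≤ ipr S g h⁻¹ + δ := min_trick h5 hB1
  -- Step D
  have h6 := ipr_hyp hS hδ (g * h) (h⁻¹ * g⁻¹) h⁻¹
  have hB2 : ipr S (g * h) h⁻¹ + δ < ipr S (h⁻¹ * g⁻¹) h⁻¹ := by linarith
  have hD : ipr S (g * h) (h⁻¹ * g⁻¹) ≤ ipr S (g * h) h⁻¹ + δ := min_trick h6 hB2
  -- Lemma A
  have hA := tlenA hS hδ0 hδ (g * h)
  rw [mul_inv_rev] at hA
  linarith

/-- moving distance `r` towards `ca` decreases the displacement of `s` when the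
relevant Gromov products are large. -/
lemma decrease {δ : ℝ} (hδ0 : 0 ≤ δ) (hδ : GromovHyperbolic (wordDist S) δ)
    (x s ca : G) (r : ℝ)
    (hx : nrm S x = r) (hxc : nrm S (x⁻¹ * ca) = nrm S ca - r)
    (hs1 : r ≤ ipr S ca s) (hs2 : r ≤ ipr S ca s⁻¹)
    (hsν : 2*r ≤ nrm S s) (hr0 : 0 ≤ r) :
    nrm S (x⁻¹ * s * x) ≤ nrm S s - 2*r + 6*δ := by
  have exa : ipr S x ca = r := by
    unfold ipr
    rw [hx, hxc]; ring
  have h1 : r - δ ≤ ipr S x s := by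
    have hh := ipr_hyp hS hδ x ca s
    have hmin : r ≤ min (ipr S x ca) (ipr S ca s) := le_min (le_of_eq exa.symm) hs1
    linarith
  have h2 : r - δ ≤ ipr S s⁻¹ x := by
    have hh := ipr_hyp hS hδ s⁻¹ ca x
    have hmin : r ≤ min (ipr S s⁻¹ ca) (ipr S ca x) := by
      refine le_min ?_ ?_
      · rw [ipr_symm hS]; exact hs2
      · rw [ipr_symm hS]; exact le_of_eq exa.symm
    linarith
  have e3 : ipr S s⁻¹ x = (nrm S s + nrm S x - nrm S (s * x)) / 2 := by
    unfold ipr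
    rw [inv_inv, nrm_inv hS]
  have hsx_up : nrm S (s * x) ≤ nrm S s - r + 2*δ := by
    rw [e3, hx] at h2; linarith
  have hsx_low : nrm S s - r ≤ nrm S (s * x) := by
    have := nrm_mul_le hS (s * x) x⁻¹
    rw [mul_inv_cancel_right, nrm_inv hS, hx] at this
    linarith
  have e4 : ipr S s (s * x) = (nrm S s + nrm S (s * x) - nrm S x) / 2 := by
    unfold ipr
    rw [show s⁻¹ * (s * x) = x by group]
  have h3 : r - δ ≤ ipr S s (s * x) := by
    rw [e4, hx]; linarith
  have h4 : r - 2*δ ≤ ipr S x (s * x) := by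
    have hh := ipr_hyp hS hδ x s (s * x)
    have hmin : r - δ ≤ min (ipr S x s) (ipr S s (s * x)) := le_min h1 h3
    linarith
  have e5 : ipr S x (s * x) = (nrm S x + nrm S (s * x) - nrm S (x⁻¹ * s * x)) / 2 := by
    unfold ipr
    rw [← mul_assoc]
  have : nrm S (x⁻¹ * s * x) = nrm S x + nrm S (s * x) - 2 * ipr S x (s * x) := by
    rw [e5]; ring
  rw [this, hx]
  linarith

end Aux5

section Aux6

variable {G : Type*} [Group G] {S : Set G} (hS : GenSymm S)

include hS

/-- Lemma B : Breuillard–Fujiwara–type bound on the minimal joint displacement. -/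
lemma lemB {δ : ℝ} (hδ0 : 0 ≤ δ) (hδ : GromovHyperbolic (wordDist S) δ)
    (T : Finset G) (hT : T.Nonempty) (M : ℝ) (hM0 : 0 ≤ M)
    (hM : ∀ u v : G, (u ∈ T ∨ u⁻¹ ∈ T) → (v ∈ T ∨ v⁻¹ ∈ T) →
      tlen (wordDist S) (u * v) ≤ M) :
    ∃ x : G, ∀ t ∈ T, nrm S (x⁻¹ * t * x) ≤ max (100 * (δ + 1)) (M + 20 * δ + 20) := by
  classical
  set f : G → ℕ := fun x => T.sup fun t => wordNorm S (x⁻¹ * t * x) with hf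
  have hfspec : ∀ x : G, ∀ t ∈ T, wordNorm S (x⁻¹ * t * x) ≤ f x := fun x t ht => by
    simpa [hf] using Finset.le_sup (f := fun t => wordNorm S (x⁻¹ * t * x)) ht
  obtain ⟨x₀, hx₀⟩ : ∃ x₀, f x₀ = sInf (Set.range f) := by
    have := Nat.sInf_mem (Set.range_nonempty f)
    rcases this with ⟨x₀, h⟩
    exact ⟨x₀, h⟩
  have hmin : ∀ x, f x₀ ≤ f x := by
    intro x
    rw [hx₀]
    exact Nat.sInf_le ⟨x, rfl⟩
  set n₀ := f x₀ with hn₀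
  set μ := (n₀ : ℝ) with hμ
  refine ⟨x₀, fun t ht => ?_⟩
  have hc : nrm S (x₀⁻¹ * t * x₀) ≤ μ := by
    have hc' : wordNorm S (x₀⁻¹ * t * x₀) ≤ n₀ := hfspec x₀ t ht
    unfold nrm
    rw [hμ]
    exact_mod_cast hc'
  suffices hsuff : μ ≤ max (100 * (δ + 1)) (M + 20 * δ + 20) by linarith
  by_cases hsmall : μ ≤ 100 * (δ + 1)
  · exact le_trans hsmall (le_max_left _ _)
  push_neg at hsmall
  -- setup of r and ρ
  set rn := n₀ / 8 with hrn
  set r := (rn : ℝ) with hrr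
  have hr8 : 8 * r ≤ μ := by
    have : 8 * rn ≤ n₀ := by omega
    rw [hμ, hrr]
    exact_mod_cast this
  have hrlow : μ < 8 * r + 8 := by
    have : n₀ < 8 * rn + 8 := by omega
    rw [hμ, hrr]
    exact_mod_cast this
  have hrδ : 3 * δ + 1 ≤ r := by linarith
  have hr2 : (2:ℝ) ≤ r := by linarith
  have hr0 : (0:ℝ) ≤ r := by linarith
  set ρ := r + 2 * δ + 1 with hρ
  have hρr : r ≤ ρ := by rw [hρ]; linarith
  -- the maximal element
  obtain ⟨a, haT, hasup⟩ := Finset.exists_mem_eq_sup T hT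
    (fun t => wordNorm S (x₀⁻¹ * t * x₀))
  set ca := x₀⁻¹ * a * x₀ with hcadef
  have hca : nrm S ca = μ := by
    have h : wordNorm S ca = n₀ := hasup.symm
    unfold nrm
    rw [hμ, h]
  -- helper to conclude from a good pair
  have finishing : ∀ u v : G, (u ∈ T ∨ u⁻¹ ∈ T) → (v ∈ T ∨ v⁻¹ ∈ T) →
      μ - 2*r - 1 ≤ nrm S (x₀⁻¹ * u * x₀) → nrm S (x₀⁻¹ * u * x₀) ≤ μ →
      μ - 2*r - 1 ≤ nrm S (x₀⁻¹ * v * x₀) → nrm S (x₀⁻¹ * v * x₀) ≤ μ →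
      ipr S (x₀⁻¹ * u * x₀)⁻¹ (x₀⁻¹ * v * x₀) ≤ ρ →
      ipr S (x₀⁻¹ * u * x₀) (x₀⁻¹ * v * x₀)⁻¹ ≤ ρ →
      μ ≤ M + 20 * δ + 20 := by
    intro u v hu hv hg1 hg2 hh1 hh2 hip1 hip2
    have hnum : ρ + 2*δ + 2 ≤ μ - 3*r - ρ := by rw [hρ]; linarith
    have hFC := FC hS hδ0 hδ (x₀⁻¹ * u * x₀) (x₀⁻¹ * v * x₀) μ r ρ
      hg1 hg2 hh1 hh2 hip1 hip2 hnum
    have hid : (x₀⁻¹ * u * x₀) * (x₀⁻¹ * v * x₀) = x₀⁻¹ * (u * v) * x₀ := by group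
    rw [hid] at hFC
    have h2 := tlen_conj_le hS x₀ (u * v)
    have h3 := hM u v hu hv
    rw [hρ] at hFC
    linarith
  -- case analysis
  by_cases hc1 : ipr S ca ca⁻¹ ≤ ρ
  · -- pair (a, a)
    have := finishing a a (Or.inl haT) (Or.inl haT)
      (by rw [hca]; linarith) (le_of_eq hca) (by rw [hca]; linarith) (le_of_eq hca)
      (by rw [ipr_symm hS]; exact hc1) hc1
    exact le_trans this (le_max_right _ _)
  push_neg at hc1
  -- geodesic prefix point
  have hrn_le : rn ≤ wordNorm S ca := by
    have : wordNorm S ca = n₀ := by rw [hn₀, hf]; exact hasup.symm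
    omega
  obtain ⟨x, hx1, hx2⟩ := exists_geodesic_prefix hS ca rn hrn_le
  have hxr : nrm S x = r := by unfold nrm; rw [hx1]
  have hxcr : nrm S (x⁻¹ * ca) = nrm S ca - r := by
    unfold nrm
    rw [hx2, Nat.cast_sub hrn_le]
  -- minimality at x₀ * x gives a bad element t₁
  obtain ⟨t₁, ht₁T, ht₁sup⟩ := Finset.exists_mem_eq_sup T hT
    (fun t => wordNorm S ((x₀ * x)⁻¹ * t * (x₀ * x)))
  have hst : μ ≤ nrm S (x⁻¹ * (x₀⁻¹ * t₁ * x₀) * x) := by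
    have h1 : n₀ ≤ f (x₀ * x) := hmin (x₀ * x)
    have h2 : f (x₀ * x) = wordNorm S ((x₀ * x)⁻¹ * t₁ * (x₀ * x)) := ht₁sup
    have h3 : (x₀ * x)⁻¹ * t₁ * (x₀ * x) = x⁻¹ * (x₀⁻¹ * t₁ * x₀) * x := by group
    rw [h3] at h2
    unfold nrm
    rw [hμ]
    exact_mod_cast h1.trans (le_of_eq h2)
  set ct := x₀⁻¹ * t₁ * x₀ with hctdef
  have hct_le : nrm S ct ≤ μ := by
    unfold nrm
    rw [hμ]
    exact_mod_cast hfspec x₀ t₁ ht₁T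
  -- claim A
  have claimA : μ - 2*r - 1 < nrm S ct := by
    by_contra hcon
    push_neg at hcon
    have h1 : nrm S (x⁻¹ * ct * x) ≤ nrm S ct + 2 * r := by
      have e1 : nrm S (x⁻¹ * ct * x) ≤ nrm S (x⁻¹ * ct) + nrm S x := nrm_mul_le hS _ _
      have e2 : nrm S (x⁻¹ * ct) ≤ nrm S x⁻¹ + nrm S ct := nrm_mul_le hS _ _
      rw [nrm_inv hS, hxr] at e2
      rw [hxr] at e1
      linarith
    linarith
  have hct2r : 2 * r ≤ nrm S ct := by linarith
  -- claim B
  have claimB : ¬ (r ≤ ipr S ca ct ∧ r ≤ ipr S ca ct⁻¹) := by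
    rintro ⟨hb1, hb2⟩
    have hdec := decrease hS hδ0 hδ x ct ca r hxr hxcr hb1 hb2 hct2r hr0
    linarith
  -- choose the right orientation
  obtain ⟨u, huT, hnrm_eq, hip_u⟩ : ∃ u : G, (u ∈ T ∨ u⁻¹ ∈ T) ∧
      nrm S (x₀⁻¹ * u * x₀) = nrm S ct ∧ ipr S ca (x₀⁻¹ * u * x₀)⁻¹ < r := by
    by_cases hcase : ipr S ca ct⁻¹ < r
    · exact ⟨t₁, Or.inl ht₁T, rfl, hcase⟩
    · push_neg at hcase
      have hlt : ipr S ca ct < r := by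
        by_contra hcon
        push_neg at hcon
        exact claimB ⟨hcon, hcase⟩
      refine ⟨t₁⁻¹, Or.inr (by rwa [inv_inv]), ?_, ?_⟩
      · rw [show x₀⁻¹ * t₁⁻¹ * x₀ = ct⁻¹ by rw [hctdef]; group, nrm_inv hS]
      · rw [show x₀⁻¹ * t₁⁻¹ * x₀ = ct⁻¹ by rw [hctdef]; group, inv_inv]
        exact hlt
  set cu := x₀⁻¹ * u * x₀ with hcudef
  have hcu1 : μ - 2*r - 1 ≤ nrm S cu := by rw [hnrm_eq]; linarith
  have hcu2 : nrm S cu ≤ μ := by rw [hnrm_eq]; exact hct_le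
  by_cases hc2a : ipr S cu ca⁻¹ ≤ ρ
  · -- pair (u, a)
    have := finishing u a huT (Or.inl haT)
      hcu1 hcu2 (by rw [hca]; linarith) (le_of_eq hca)
      (by rw [ipr_symm hS]; rw [← hcadef]; exact le_trans hip_u.le hρr) hc2a
    exact le_trans this (le_max_right _ _)
  · push_neg at hc2a
    -- pair (u, u)
    have step1 : ρ - δ ≤ ipr S cu ca := by
      have hh := ipr_hyp hS hδ cu ca⁻¹ ca
      have hmin2 : ρ ≤ min (ipr S cu ca⁻¹) (ipr S ca⁻¹ ca) := by
        refine le_min hc2a.le ?_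
        rw [ipr_symm hS]
        exact hc1.le
      linarith
    have step2 : ipr S cu⁻¹ cu ≤ ρ := by
      have h7 := ipr_hyp hS hδ cu⁻¹ cu ca
      have hipC : ipr S cu⁻¹ ca < r := by
        rw [ipr_symm hS]
        exact hip_u
      have hB : ipr S cu⁻¹ ca + δ < ipr S cu ca := by
        rw [hρ] at step1
        linarith
      have := min_trick h7 hB
      rw [hρ]
      linarith
    have := finishing u u huT huT hcu1 hcu2 hcu1 hcu2
      step2 (by rw [ipr_symm hS]; exact step2)
    exact le_trans this (le_max_right _ _)

end Aux6

section Aux7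

variable {G : Type*} [Group G]

lemma ball_finite (S₀ : Finset G) (hS : GenSymm (↑S₀ : Set G)) (n : ℕ) :
    {g : G | wordNorm (↑S₀ : Set G) g ≤ n}.Finite := by
  classical
  haveI : Finite ↥(↑S₀ : Set G) := S₀.finite_toSet.to_subtype
  have hsub : {g : G | wordNorm (↑S₀ : Set G) g ≤ n} ⊆
      ⋃ k ∈ Set.Iic n, Set.range (fun f : Fin k → ↥(↑S₀ : Set G) =>
        (List.ofFn fun i => ((f i : G))).prod) := by
    intro g hg
    obtain ⟨F, hF, hprod⟩ := Nat.sInf_mem (WNset_nonempty hS g)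
    refine Set.mem_biUnion (show wordNorm (↑S₀ : Set G) g ∈ Set.Iic n from hg) ?_
    exact ⟨fun i => ⟨F i, hF i⟩, hprod⟩
  exact Set.Finite.subset
    (Set.Finite.biUnion (Set.finite_Iic n) (fun k _ => Set.finite_range _)) hsub

lemma mulAut_ext_of_gen {S : Set G} (hS : GenSymm S) (φ₁ φ₂ : MulAut G)
    (h : ∀ s ∈ S, φ₁ s = φ₂ s) : φ₁ = φ₂ := by
  refine MulEquiv.ext (fun g => ?_)
  have hg : g ∈ Subgroup.closure S := by rw [hS.2]; exact Subgroup.mem_top g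
  induction hg using Subgroup.closure_induction with
  | mem x hx => exact h x hx
  | one => rw [map_one, map_one]
  | mul x y hx hy ihx ihy => rw [map_mul, map_mul, ihx, ihy]
  | inv x hx ihx => rw [map_inv, map_inv, ihx]

lemma phi_finite (S₀ : Finset G) (hS : GenSymm (↑S₀ : Set G)) (n : ℕ) :
    {φ : MulAut G | ∀ s ∈ S₀, wordNorm (↑S₀ : Set G) (φ s) ≤ n}.Finite := by
  classical
  set B := {g : G | wordNorm (↑S₀ : Set G) g ≤ n} with hB
  have hBfin : B.Finite := ball_finite S₀ hS n
  haveI : Finite ↥B := hBfin.to_subtype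
  haveI : Finite ↥(↑S₀ : Set G) := S₀.finite_toSet.to_subtype
  rw [← Set.finite_coe_iff]
  refine Finite.of_injective
    (fun φ : ↥{φ : MulAut G | ∀ s ∈ S₀, wordNorm (↑S₀ : Set G) (φ s) ≤ n} =>
      (fun s : ↥(↑S₀ : Set G) => (⟨φ.1 s.1, φ.2 s.1 s.2⟩ : ↥B))) ?_
  intro φ₁ φ₂ heq
  refine Subtype.ext (mulAut_ext_of_gen hS _ _ (fun s hs => ?_))
  have := congrFun heq ⟨s, hs⟩
  exact Subtype.ext_iff.1 this

lemma conj_swap (φ : MulAut G) (x : G) :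
    MulAut.conj x * φ = φ * MulAut.conj ((φ⁻¹ : MulAut G) x) := by
  refine MulEquiv.ext (fun y => ?_)
  show MulAut.conj x (φ y) = φ (MulAut.conj ((φ⁻¹ : MulAut G) x) y)
  simp only [MulAut.conj_apply, map_mul, map_inv]
  rw [show φ ((φ⁻¹ : MulAut G) x) = x by
    rw [MulAut.inv_def]; exact φ.apply_symm_apply x]

end Aux7

section Aux8

variable {G : Type*} [Group G]

/-- Key lemma: an automorphism with uniformly bounded multiplicative distortion of the
word norm agrees with an element of a fixed finite set of automorphisms up to an
inner automorphism. -/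
lemma key_lemma (S₀ : Finset G) (hS₀ : GenSymm (↑S₀ : Set G)) (hS₀ne : S₀.Nonempty)
    {δ : ℝ} (hδ0 : 0 ≤ δ) (hδ : GromovHyperbolic (wordDist (↑S₀ : Set G)) δ)
    (P : ℝ) (hP : 0 ≤ P) (χ : MulAut G)
    (hχ : ∃ Q : ℝ, 0 ≤ Q ∧ ∀ g : G, nrm (↑S₀ : Set G) (χ g) ≤ P * nrm (↑S₀ : Set G) g + Q) :
    ∃ φ : MulAut G,
      (∀ s ∈ S₀, wordNorm (↑S₀ : Set G) (φ s)
          ≤ Nat.floor (max (100 * (δ + 1)) (2 * P + 20 * δ + 20))) ∧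
      ∃ g : G, χ = φ * MulAut.conj g := by
  classical
  obtain ⟨Q, hQ0, hQ⟩ := hχ
  set T : Finset G := S₀.image (fun s => χ s) with hT
  have hTne : T.Nonempty := hS₀ne.image _
  -- translation length bound for products of two elements of T ∪ T⁻¹
  have hM : ∀ u v : G, (u ∈ T ∨ u⁻¹ ∈ T) → (v ∈ T ∨ v⁻¹ ∈ T) →
      tlen (wordDist (↑S₀ : Set G)) (u * v) ≤ 2 * P := by
    have hshort : ∀ u : G, (u ∈ T ∨ u⁻¹ ∈ T) →
        ∃ w : G, nrm (↑S₀ : Set G) w ≤ 1 ∧ u = χ w := by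
      intro u hu
      rcases hu with hu | hu
      · obtain ⟨s, hs, rfl⟩ := Finset.mem_image.1 hu
        refine ⟨s, ?_, rfl⟩
        have := wordNorm_gen (S := (↑S₀ : Set G)) (Finset.mem_coe.2 hs)
        unfold nrm
        exact_mod_cast this
      · obtain ⟨s, hs, hsu⟩ := Finset.mem_image.1 hu
        refine ⟨s⁻¹, ?_, by rw [map_inv, hsu, inv_inv]⟩
        have h1 := wordNorm_gen (S := (↑S₀ : Set G)) (Finset.mem_coe.2 hs)
        have h2 : nrm (↑S₀ : Set G) s⁻¹ = nrm (↑S₀ : Set G) s := nrm_inv hS₀ s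
        rw [h2]
        unfold nrm
        exact_mod_cast h1
    intro u v hu hv
    obtain ⟨w, hw, rfl⟩ := hshort u hu
    obtain ⟨w', hw', rfl⟩ := hshort v hv
    have huv : χ w * χ w' = χ (w * w') := (map_mul χ w w').symm
    rw [huv]
    have htrans : tlen (wordDist (↑S₀ : Set G)) (χ (w * w'))
        ≤ P * tlen (wordDist (↑S₀ : Set G)) (w * w') := by
      refine tlen_transfer _ _ (w * w') (χ (w * w')) P Q hP hQ0
        (fun n => Nat.cast_nonneg _) (fun n => Nat.cast_nonneg _)
        (nrm_pow_subadd hS₀ _) (fun n => ?_)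
      have hpow : (χ (w * w')) ^ (n + 1) = χ ((w * w') ^ (n + 1)) := (map_pow χ _ _).symm
      rw [hpow, wordDist_norm hS₀, wordDist_norm hS₀]
      exact hQ _
    have hlen : tlen (wordDist (↑S₀ : Set G)) (w * w') ≤ 2 := by
      have h1 := tlen_le_nrm hS₀ (w * w')
      have h2 := nrm_mul_le hS₀ w w'
      linarith
    calc tlen (wordDist (↑S₀ : Set G)) (χ (w * w'))
        ≤ P * tlen (wordDist (↑S₀ : Set G)) (w * w') := htrans
      _ ≤ P * 2 := mul_le_mul_of_nonneg_left hlen hP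
      _ = 2 * P := by ring
  obtain ⟨x₁, hx₁⟩ := lemB hS₀ hδ0 hδ T hTne (2 * P) (by linarith) hM
  set φ : MulAut G := MulAut.conj x₁⁻¹ * χ with hφ
  refine ⟨φ, ?_, ⟨(φ⁻¹ : MulAut G) x₁, ?_⟩⟩
  · intro s hs
    have hφs : φ s = x₁⁻¹ * χ s * x₁ := by
      show MulAut.conj x₁⁻¹ (χ s) = _
      rw [MulAut.conj_apply, inv_inv]
    have hmem : χ s ∈ T := Finset.mem_image_of_mem _ hs
    have := hx₁ (χ s) hmem
    rw [← hφs] at this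
    exact Nat.le_floor this
  · have h1 : MulAut.conj x₁ * φ = χ := by
      rw [hφ, ← mul_assoc, ← map_mul MulAut.conj, mul_inv_cancel, map_one, one_mul]
    rw [← h1, conj_swap]

end Aux8

section Aux9

variable {G : Type*} [Group G]

lemma pseudo_nonneg {d : G → G → ℝ} (hd : IsPseudometric d) (x y : G) : 0 ≤ d x y := by
  have h1 := hd.1 x
  have h2 := hd.2.1 y x
  have h3 := hd.2.2 x y x
  linarith

lemma wordDist_one_right (S : Set G) (w : G) : wordDist S 1 w = nrm S w := by
  unfold wordDist nrm
  rw [inv_one, one_mul]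

lemma wordNorm_prod_le {S : Set G} (hS : GenSymm S) (κ : ℕ) (l : List G)
    (h : ∀ x ∈ l, wordNorm S x ≤ κ) : wordNorm S l.prod ≤ κ * l.length := by
  induction l with
  | nil => simp [wordNorm_one]
  | cons a t ih =>
      have h1 := wordNorm_mul_le hS a t.prod
      have h2 := ih (fun x hx => h x (List.mem_cons_of_mem a hx))
      have h3 := h a List.mem_cons_self
      simp only [List.prod_cons, List.length_cons]
      calc wordNorm S (a * t.prod) ≤ κ + κ * t.length := by omega
        _ = κ * (t.length + 1) := by ring

lemma wordNorm_aut {S : Set G} (hS : GenSymm S) (θ : MulAut G) (κ : ℕ)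
    (hκ : ∀ s ∈ S, wordNorm S (θ s) ≤ κ) (g : G) :
    wordNorm S (θ g) ≤ κ * wordNorm S g := by
  rcases exists_min_list hS g with ⟨l, hl, pl, nl⟩
  rw [← nl, ← pl]
  have hmap : θ l.prod = (l.map θ).prod := map_list_prod (θ : G →* G) l
  rw [hmap]
  have := wordNorm_prod_le hS κ (l.map θ) (by
    intro x hx
    rcases List.mem_map.1 hx with ⟨w, hw, rfl⟩
    exact hκ w (hl w hw))
  simpa using this

end Aux9

section Aux10

variable {G : Type*} [Group G]

lemma aut_dist_bound {S : Finset G} (hS : GenSymm (↑S : Set G)) {d : G → G → ℝ}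
    (l1' l2' e : ℝ) (hl1' : 0 < l1') (hl2' : 0 < l2') (he : 0 ≤ e)
    (hqi : ∀ x y : G, wordDist (↑S : Set G) x y / l1' - e ≤ d x y ∧
      d x y ≤ l2' * wordDist (↑S : Set G) x y + e)
    (θ : MulAut G) :
    ∃ Pθ Qθ : ℝ, 0 ≤ Pθ ∧ 0 ≤ Qθ ∧ ∀ x y : G, d (θ x) (θ y) ≤ Pθ * d x y + Qθ := by
  classical
  set κθ := S.sup (fun s => wordNorm (↑S : Set G) (θ s)) with hκθdef
  have hκθ : ∀ s ∈ (↑S : Set G), wordNorm (↑S : Set G) (θ s) ≤ κθ := by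
    intro s hs
    simpa [hκθdef] using Finset.le_sup (f := fun s => wordNorm (↑S : Set G) (θ s)) (Finset.mem_coe.1 hs)
  have haut : ∀ g : G, nrm (↑S : Set G) (θ g) ≤ (κθ : ℝ) * nrm (↑S : Set G) g := by
    intro g
    have := wordNorm_aut hS θ κθ hκθ g
    unfold nrm
    exact_mod_cast this
  have hκθ0 : (0:ℝ) ≤ (κθ : ℝ) := Nat.cast_nonneg _
  refine ⟨l2' * κθ * l1', l2' * κθ * l1' * e + e, by positivity, by positivity, fun x y => ?_⟩
  have keyrw : wordDist (↑S : Set G) (θ x) (θ y) = nrm (↑S : Set G) (θ (x⁻¹ * y)) := by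
    unfold wordDist nrm
    rw [map_mul, map_inv]
  have h2 : d (θ x) (θ y) ≤ l2' * nrm (↑S : Set G) (θ (x⁻¹ * y)) + e := by
    have := (hqi (θ x) (θ y)).2
    rwa [keyrw] at this
  have h3 := haut (x⁻¹ * y)
  have h4 : nrm (↑S : Set G) (x⁻¹ * y) ≤ l1' * d x y + l1' * e := by
    have h5 := (hqi x y).1
    have h6 : wordDist (↑S : Set G) x y = nrm (↑S : Set G) (x⁻¹ * y) := rfl
    rw [h6] at h5
    have h7 : nrm (↑S : Set G) (x⁻¹ * y) / l1' ≤ d x y + e := by linarith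
    have := (div_le_iff₀ hl1').1 h7
    linarith [this]
  have h8 : nrm (↑S : Set G) (θ (x⁻¹ * y)) ≤ (κθ : ℝ) * (l1' * d x y + l1' * e) :=
    le_trans h3 (mul_le_mul_of_nonneg_left h4 hκθ0)
  have h9 : l2' * nrm (↑S : Set G) (θ (x⁻¹ * y)) ≤ l2' * ((κθ : ℝ) * (l1' * d x y + l1' * e)) :=
    mul_le_mul_of_nonneg_left h8 hl2'.le
  nlinarith [h2, h9]

end Aux10
set_option maxHeartbeats 3000000 in
/-- The action of `Out(G)` on `(𝒟(G), Δ)` is metrically proper: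
for any `ρ = [d]` and `R ≥ 0` there are finitely many outer classes (represented by a
finite set `F` of automorphisms, up to inner automorphisms) containing every `ψ` with
`Δ(ρ, ψ(ρ)) = log Λ(d, ψ(d)) ≤ R`. -/
theorem out_action_metrically_proper (G : Type*) [Group G]
    (hG : IsHyperbolicGroup G) (hne : NonElementary G)
    (d : G → G → ℝ) (hd : InD d) (R : ℝ) (hR : 0 ≤ R) :
    ∃ F : Finset (MulAut G), ∀ ψ : MulAut G,
      Real.log (Lam d (pull ψ d)) ≤ R → ∃ φ ∈ F, ∃ g : G, ψ = φ * MulAut.conj g := by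
  classical
  obtain ⟨S₀, hS₀, δ₀, hδ₀0, hδ₀⟩ := hG
  obtain ⟨hdps, hdli, _hhyp, S, hSgen, l1', l2', e, hl1', hl2', he, hqi⟩ := hd
  have hdnn : ∀ x y : G, 0 ≤ d x y := pseudo_nonneg hdps
  -- `S₀` is nonempty since `G` is not trivial
  have hS₀ne : S₀.Nonempty := by
    rw [Finset.nonempty_iff_ne_empty]
    intro hemp
    refine hne ⟨⊤, ⟨?_⟩, fun a _ b _ => ?_⟩
    · rw [Subgroup.index_top]; exact one_ne_zero
    · have htriv : ∀ g : G, g = 1 := by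
        intro g
        have hg : g ∈ Subgroup.closure (↑S₀ : Set G) := by
          rw [hS₀.2]; exact Subgroup.mem_top g
        rw [hemp] at hg
        simpa [Subgroup.closure_empty, Subgroup.mem_bot] using hg
      rw [htriv a, htriv b]
  -- comparison constants between the two word metrics
  set κ₀ := S.sup (fun s => wordNorm (↑S₀ : Set G) s) with hκ₀def
  set κ₁ := S₀.sup (fun s => wordNorm (↑S : Set G) s) with hκ₁def
  have hκ₀0 : (0:ℝ) ≤ (κ₀:ℝ) := Nat.cast_nonneg _
  have hκ₁0 : (0:ℝ) ≤ (κ₁:ℝ) := Nat.cast_nonneg _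
  have hcomp0 : ∀ g : G, nrm (↑S₀ : Set G) g ≤ (κ₀:ℝ) * nrm (↑S : Set G) g := by
    intro g
    have := wordNorm_comp hSgen hS₀ κ₀
      (fun s hs => Finset.le_sup (f := fun s => wordNorm (↑S₀ : Set G) s)
        (Finset.mem_coe.1 hs)) g
    unfold nrm
    exact_mod_cast this
  have hcomp1 : ∀ g : G, nrm (↑S : Set G) g ≤ (κ₁:ℝ) * nrm (↑S₀ : Set G) g := by
    intro g
    have := wordNorm_comp hS₀ hSgen κ₁
      (fun s hs => Finset.le_sup (f := fun s => wordNorm (↑S : Set G) s)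
        (Finset.mem_coe.1 hs)) g
    unfold nrm
    exact_mod_cast this
  -- the threshold constants
  set L := Real.sqrt (Real.exp R + 1) with hLdef
  have hexp1 : (1:ℝ) ≤ Real.exp R := by
    rw [show (1:ℝ) = Real.exp 0 by simp]
    exact Real.exp_le_exp.2 hR
  have hL1 : 1 ≤ L := by
    rw [hLdef]
    have h := Real.sqrt_le_sqrt (show (1:ℝ) ≤ Real.exp R + 1 by linarith)
    simpa using h
  have hL0 : 0 ≤ L := by linarith
  have hLsq : L * L = Real.exp R + 1 := Real.mul_self_sqrt (by linarith)
  set P := (κ₀:ℝ) * l1' * L * l2' * (κ₁:ℝ) with hPdef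
  have hP0 : 0 ≤ P := by
    rw [hPdef]
    exact mul_nonneg (mul_nonneg (mul_nonneg (mul_nonneg hκ₀0 hl1'.le) hL0) hl2'.le) hκ₁0
  set Cn := Nat.floor (max (100 * (δ₀ + 1)) (2 * P + 20 * δ₀ + 20)) with hCndef
  have hΦfin : {φ : MulAut G | ∀ s ∈ S₀, wordNorm (↑S₀ : Set G) (φ s) ≤ Cn}.Finite :=
    phi_finite S₀ hS₀ Cn
  refine ⟨hΦfin.toFinset ∪ hΦfin.toFinset.image (·⁻¹), fun ψ hψ => ?_⟩
  -- the quasi-isometry constant set is nonempty and bounded below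
  set ΛS := {l : ℝ | ∃ l1 l2 A : ℝ, 0 < l1 ∧ 0 < l2 ∧ 0 ≤ A ∧ l = l1 * l2 ∧
    ∀ x y : G, pull ψ d x y / l1 - A ≤ d x y ∧ d x y ≤ l2 * pull ψ d x y + A} with hΛSdef
  have hLam : Lam d (pull ψ d) = sInf ΛS := rfl
  obtain ⟨P1, Q1, hP10, hQ10, hB1⟩ := aut_dist_bound hSgen l1' l2' e hl1' hl2' he hqi ψ⁻¹
  obtain ⟨P2, Q2, hP20, hQ20, hB2⟩ := aut_dist_bound hSgen l1' l2' e hl1' hl2' he hqi ψ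
  have hpull : ∀ x y : G, pull ψ d x y = d ((ψ⁻¹ : MulAut G) x) ((ψ⁻¹ : MulAut G) y) := by
    intro x y
    rw [show ((ψ⁻¹ : MulAut G) x) = ψ.symm x by rw [MulAut.inv_def],
      show ((ψ⁻¹ : MulAut G) y) = ψ.symm y by rw [MulAut.inv_def]]
    rfl
  have hne_l : ΛS.Nonempty := by
    have hQmax0 : 0 ≤ max Q1 Q2 := le_trans hQ10 (le_max_left _ _)
    refine ⟨(P1 + 1) * (P2 + 1), P1 + 1, P2 + 1, max Q1 Q2, by linarith, by linarith,
      hQmax0, rfl, fun x y => ?_⟩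
    constructor
    · have h1 : pull ψ d x y ≤ P1 * d x y + Q1 := by rw [hpull]; exact hB1 x y
      have h3 : pull ψ d x y / (P1 + 1) ≤ d x y + max Q1 Q2 := by
        rw [div_le_iff₀ (by linarith : (0:ℝ) < P1 + 1)]
        nlinarith [hdnn x y, le_max_left Q1 Q2]
      linarith
    · have h1 : d x y ≤ P2 * pull ψ d x y + Q2 := by
        have h2 := hB2 ((ψ⁻¹ : MulAut G) x) ((ψ⁻¹ : MulAut G) y)
        rw [hpull]
        rwa [show ψ ((ψ⁻¹ : MulAut G) x) = x by
            rw [MulAut.inv_def]; exact ψ.apply_symm_apply x,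
          show ψ ((ψ⁻¹ : MulAut G) y) = y by
            rw [MulAut.inv_def]; exact ψ.apply_symm_apply y] at h2
      have hpnn : 0 ≤ pull ψ d x y := by rw [hpull]; exact hdnn _ _
      nlinarith [le_max_right Q1 Q2]
  have hbdd : BddBelow ΛS := by
    refine ⟨0, fun l hl => ?_⟩
    obtain ⟨l1, l2, A, h1, h2, _, rfl, _⟩ := hl
    positivity
  -- `Λ ≤ e^R`, so there is a witness with `l1 * l2 < e^R + 1`
  have hLam_le : Lam d (pull ψ d) ≤ Real.exp R := by
    by_contra hcon
    push_neg at hcon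
    have := Real.log_lt_log (Real.exp_pos R) hcon
    rw [Real.log_exp] at this
    linarith
  obtain ⟨l, hlmem, hllt⟩ := (csInf_lt_iff hbdd hne_l).1
    (show sInf ΛS < Real.exp R + 1 by rw [← hLam]; linarith)
  obtain ⟨l1, l2, A, hl1, hl2, hA, rfl, hle⟩ := hlmem
  have hminL : l1 ≤ L ∨ l2 ≤ L := by
    by_contra hcon
    push_neg at hcon
    have : L * L < l1 * l2 := by nlinarith [hcon.1, hcon.2]
    rw [hLsq] at this
    linarith
  -- the two pointwise displacement bounds
  have hd1 : ∀ g : G, d 1 (ψ g) ≤ l2 * d 1 g + A := by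
    intro g
    have h2 := (hle 1 (ψ g)).2
    have hp : pull ψ d 1 (ψ g) = d 1 g := by
      show d (ψ.symm 1) (ψ.symm (ψ g)) = d 1 g
      rw [map_one, ψ.symm_apply_apply]
    rwa [hp] at h2
  have hd2 : ∀ g : G, d 1 ((ψ⁻¹ : MulAut G) g) ≤ l1 * d 1 g + l1 * A := by
    intro g
    have h5 := (hle 1 g).1
    have hp : pull ψ d 1 g = d 1 ((ψ⁻¹ : MulAut G) g) := by
      show d (ψ.symm 1) (ψ.symm g) = _
      rw [map_one, show ((ψ⁻¹ : MulAut G) g) = ψ.symm g by rw [MulAut.inv_def]]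
    rw [hp] at h5
    have h7 : d 1 ((ψ⁻¹ : MulAut G) g) / l1 ≤ d 1 g + A := by linarith
    have h8 := (div_le_iff₀ hl1).1 h7
    linarith
  -- main auxiliary step: either orientation gives a normalized automorphism
  have keyχ : ∀ χ : MulAut G, ∀ lc Ac : ℝ, 0 < lc → lc ≤ L → 0 ≤ Ac →
      (∀ g : G, d 1 (χ g) ≤ lc * d 1 g + Ac) →
      ∃ φ : MulAut G, (∀ s ∈ S₀, wordNorm (↑S₀ : Set G) (φ s) ≤ Cn) ∧
        ∃ g : G, χ = φ * MulAut.conj g := by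
    intro χ lc Ac hlc hlcL hAc hbound
    have hQc0 : 0 ≤ (κ₀:ℝ) * l1' * (lc * e + Ac + e) := by
      have h0 : (0:ℝ) ≤ lc * e + Ac + e := by nlinarith [mul_nonneg hlc.le he]
      exact mul_nonneg (mul_nonneg hκ₀0 hl1'.le) h0
    refine key_lemma S₀ hS₀ hS₀ne hδ₀0 hδ₀ P hP0 χ
      ⟨(κ₀:ℝ) * l1' * (lc * e + Ac + e), hQc0, fun g => ?_⟩
    have c1 : nrm (↑S₀ : Set G) (χ g) ≤ (κ₀:ℝ) * nrm (↑S : Set G) (χ g) := hcomp0 _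
    have c2 : nrm (↑S : Set G) (χ g) ≤ l1' * d 1 (χ g) + l1' * e := by
      have h5 := (hqi 1 (χ g)).1
      rw [wordDist_one_right] at h5
      have h7 : nrm (↑S : Set G) (χ g) / l1' ≤ d 1 (χ g) + e := by linarith
      have h8 := (div_le_iff₀ hl1').1 h7
      linarith
    have c3 : d 1 (χ g) ≤ lc * d 1 g + Ac := hbound g
    have c4 : d 1 g ≤ l2' * nrm (↑S : Set G) g + e := by
      have h5 := (hqi 1 g).2
      rwa [wordDist_one_right] at h5
    have c5 : nrm (↑S : Set G) g ≤ (κ₁:ℝ) * nrm (↑S₀ : Set G) g := hcomp1 g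
    have n1 : 0 ≤ d 1 g := hdnn 1 g
    have n2 : (0:ℝ) ≤ nrm (↑S₀ : Set G) g := nrm_nonneg g
    have b1 : nrm (↑S : Set G) (χ g) ≤ l1' * (lc * d 1 g + Ac) + l1' * e := by
      have := mul_le_mul_of_nonneg_left c3 hl1'.le
      linarith
    have b2 : d 1 g ≤ l2' * ((κ₁:ℝ) * nrm (↑S₀ : Set G) g) + e := by
      have := mul_le_mul_of_nonneg_left c5 hl2'.le
      linarith
    have b3 : nrm (↑S : Set G) (χ g)
        ≤ l1' * (lc * (l2' * ((κ₁:ℝ) * nrm (↑S₀ : Set G) g) + e) + Ac) + l1' * e := by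
      have := mul_le_mul_of_nonneg_left b2 (mul_nonneg hl1'.le hlc.le)
      linarith [this]
    have b4 : nrm (↑S₀ : Set G) (χ g)
        ≤ (κ₀:ℝ) * (l1' * (lc * (l2' * ((κ₁:ℝ) * nrm (↑S₀ : Set G) g) + e) + Ac) + l1' * e) :=
      le_trans c1 (mul_le_mul_of_nonneg_left b3 hκ₀0)
    have hX : (0:ℝ) ≤ (κ₀:ℝ) * l1' * l2' * (κ₁:ℝ) * nrm (↑S₀ : Set G) g :=
      mul_nonneg (mul_nonneg (mul_nonneg (mul_nonneg hκ₀0 hl1'.le) hl2'.le) hκ₁0) n2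
    have hterm := mul_le_mul_of_nonneg_right hlcL hX
    rw [hPdef]
    linarith [b4, hterm]
  rcases hminL with hcase | hcase
  · -- `l1 ≤ L` : normalize `ψ⁻¹`
    obtain ⟨φ, hφmem, g, hfact⟩ :=
      keyχ ψ⁻¹ l1 (l1 * A) hl1 hcase (mul_nonneg hl1.le hA) hd2
    refine ⟨φ⁻¹, Finset.mem_union.2 (Or.inr (Finset.mem_image_of_mem _
      (hΦfin.mem_toFinset.2 hφmem))), ((φ⁻¹ : MulAut G)⁻¹ g⁻¹), ?_⟩
    have h1 : ψ = (MulAut.conj g)⁻¹ * φ⁻¹ := by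
      rw [← mul_inv_rev, ← hfact, inv_inv]
    rw [h1, ← map_inv MulAut.conj g, conj_swap]
  · -- `l2 ≤ L` : normalize `ψ`
    obtain ⟨φ, hφmem, g, hfact⟩ := keyχ ψ l2 A hl2 hcase hA hd1
    exact ⟨φ, Finset.mem_union.2 (Or.inl (hΦfin.mem_toFinset.2 hφmem)), g, hfact⟩

end
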